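/- Let H be a connected finite simple graph with |V(H)| ≥ 2, let v be a vertex of H, let k ≥ 0, and let G be the graph on n = |V(H)| + 2k vertices obtained from H by attaching k pendent paths of length 2 at v (i.e., for each of k new pairs of vertices a_j, b_j, adding the edges v a_j and a_j b_j). Then Q_G(x) = (x²−3x+1)^k Q_H(x) − k x (x−2) (x²−3x+1)^{k−1} Q_{H|v}(x). -/

import Mathlib

open Polynomial SimpleGraph Matrix

open scoped Classical

/-- The signless Laplacian matrix `Q(G) = D(G) + A(G)` of a simple graph, over `ℝ`. -/
noncomputable def sLap {V : Type*} [Fintype V] (G : SimpleGraph V) : Matrix V V ℝ :=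
  Matrix.of fun x y =>
    (if x = y then ((G.neighborSet x).ncard : ℝ) else 0) + (if G.Adj x y then 1 else 0)

/-- The signless Laplacian characteristic polynomial `Q_G(x) = det (xI - Q(G))`. -/
noncomputable def QPoly {V : Type*} [Fintype V] [DecidableEq V] (G : SimpleGraph V) :
    Polynomial ℝ :=
  (sLap G).charpoly

/-- The signless Laplacian coefficients `φ_i(G)`, defined by
`det(xI − Q(G)) = Σ_{i=0}^n (−1)^i φ_i(G) x^{n−i}`. -/
noncomputable def phi {V : Type*} [Fintype V] [DecidableEq V] (G : SimpleGraph V) (i : ℕ) : ℝ :=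
  (-1 : ℝ) ^ i * (QPoly G).coeff (Fintype.card V - i)

/-- A unicyclic graph: connected with as many edges as vertices. -/
def IsUnicyclic {V : Type*} [Fintype V] (G : SimpleGraph V) : Prop :=
  G.Connected ∧ G.edgeSet.ncard = Fintype.card V

/-- A vertex lies on (the unique) cycle of `G`. -/
def OnCycle {V : Type*} (G : SimpleGraph V) (x : V) : Prop :=
  ∃ (y : V) (p : G.Walk y y), p.IsCycle ∧ x ∈ p.support

/-- The (unique) cycle of `G` has odd length. -/
def HasOddCycle {V : Type*} (G : SimpleGraph V) : Prop :=
  ∃ (x : V) (p : G.Walk x x), p.IsCycle ∧ Odd p.length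

/-- The (unique) cycle of `G` has even length. -/
def HasEvenCycle {V : Type*} (G : SimpleGraph V) : Prop :=
  ∃ (x : V) (p : G.Walk x x), p.IsCycle ∧ Even p.length

/-- `M` is a matching of `G`: a set of edges of `G`, pairwise sharing no vertex. -/
def IsMatchingFinset {V : Type*} (G : SimpleGraph V) (M : Finset (Sym2 V)) : Prop :=
  (∀ e ∈ M, e ∈ G.edgeSet) ∧ ∀ e ∈ M, ∀ f ∈ M, e ≠ f → ∀ x : V, x ∈ e → x ∉ f

/-- `G` has matching number `m`. -/
def HasMatchingNumber {V : Type*} (G : SimpleGraph V) (m : ℕ) : Prop :=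
  (∃ M : Finset (Sym2 V), IsMatchingFinset G M ∧ M.card = m) ∧
    ∀ M : Finset (Sym2 V), IsMatchingFinset G M → M.card ≤ m

/-- Every tree attached to the cycle of `G` is a pendent path of length at most 2
attached at a cycle vertex: every vertex off the cycle is either a pendent vertex
attached to a cycle vertex, the middle vertex of a pendent path of length 2 attached
at a cycle vertex, or the end vertex of such a path. -/
def PendantPathsOnly {V : Type*} (G : SimpleGraph V) : Prop :=
  ∀ x : V, ¬ OnCycle G x →
    ((G.neighborSet x).ncard = 1 ∧ ∃ c, G.Adj x c ∧ OnCycle G c) ∨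
    ((G.neighborSet x).ncard = 2 ∧
      ∃ c y, G.Adj x c ∧ OnCycle G c ∧ G.Adj x y ∧ (G.neighborSet y).ncard = 1) ∨
    ((G.neighborSet x).ncard = 1 ∧
      ∃ y c, G.Adj x y ∧ (G.neighborSet y).ncard = 2 ∧ G.Adj y c ∧ OnCycle G c)

/-- Vertex type of the unicyclic graph `G_g(s₁,t₁;…;s_g,t_g)`: the cycle vertices, the
vertices of the pendent paths of length 2, and the pendent vertices. -/
abbrev GgV (g : ℕ) (s t : Fin g → ℕ) : Type :=
  Fin g ⊕ ((Σ i : Fin g, Fin (s i) × Fin 2) ⊕ (Σ i : Fin g, Fin (t i)))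

/-- The unicyclic graph `G_g(s₁,t₁;…;s_g,t_g)` obtained from a cycle `u_1 … u_g u_1` by
attaching `s i` pendent paths of length 2 and `t i` pendent edges at the vertex `u i`. -/
def Gg (g : ℕ) [NeZero g] (s t : Fin g → ℕ) : SimpleGraph (GgV g s t) :=
  SimpleGraph.fromRel fun x y =>
    match x, y with
    | Sum.inl i, Sum.inl j => j = i + 1
    | Sum.inl i, Sum.inr (Sum.inl a) => a.1 = i ∧ a.2.2 = 0
    | Sum.inr (Sum.inl a), Sum.inr (Sum.inl b) => a.2.2 = 0 ∧ b = ⟨a.1, (a.2.1, 1)⟩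
    | Sum.inl i, Sum.inr (Sum.inr b) => b.1 = i
    | _, _ => False

/-- `Q_{G|v}(x)`: the characteristic polynomial of the principal submatrix of `Q(G)`
obtained by deleting the row and column corresponding to the vertex `v`. -/
noncomputable def QPolyDel {V : Type*} [Fintype V] [DecidableEq V] (G : SimpleGraph V)
    (v : V) : Polynomial ℝ :=
  ((sLap G).submatrix (fun x : {x : V // x ≠ v} => (x : V))
    (fun x : {x : V // x ≠ v} => (x : V))).charpoly

/-- The graph obtained from `H` by attaching `k` pendent paths of length 2 at `v`:
for each `j : Fin k`, the vertex `(j, 0)` is joined to `v` and to `(j, 1)`. -/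
def addPaths2 {V : Type*} (H : SimpleGraph V) (v : V) (k : ℕ) :
    SimpleGraph (V ⊕ Fin k × Fin 2) :=
  SimpleGraph.fromRel fun x y =>
    match x, y with
    | Sum.inl a, Sum.inl b => H.Adj a b
    | Sum.inl a, Sum.inr c => a = v ∧ c.2 = 0
    | Sum.inr c, Sum.inr d => c.1 = d.1 ∧ c.2 = 0 ∧ d.2 = 1
    | _, _ => False

section AuxQP

set_option linter.unusedSectionVars false

variable {V : Type} [Fintype V] [DecidableEq V] (H : SimpleGraph V) (v : V) (k : ℕ)

lemma adj_ll (a b : V) : (addPaths2 H v k).Adj (Sum.inl a) (Sum.inl b) ↔ H.Adj a b := by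
  simp only [addPaths2, fromRel_adj]
  constructor
  · rintro ⟨h, h1 | h1⟩
    · exact h1
    · exact h1.symm
  · intro h
    exact ⟨by simpa using h.ne, Or.inl h⟩

lemma adj_lr (a : V) (c : Fin k × Fin 2) :
    (addPaths2 H v k).Adj (Sum.inl a) (Sum.inr c) ↔ a = v ∧ c.2 = 0 := by
  simp [addPaths2, fromRel_adj]

lemma adj_rl (a : V) (c : Fin k × Fin 2) :
    (addPaths2 H v k).Adj (Sum.inr c) (Sum.inl a) ↔ a = v ∧ c.2 = 0 := by
  rw [SimpleGraph.adj_comm]; exact adj_lr H v k a c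

lemma adj_rr (c d : Fin k × Fin 2) :
    (addPaths2 H v k).Adj (Sum.inr c) (Sum.inr d) ↔
      c.1 = d.1 ∧ ((c.2 = 0 ∧ d.2 = 1) ∨ (d.2 = 0 ∧ c.2 = 1)) := by
  simp only [addPaths2, fromRel_adj]
  constructor
  · rintro ⟨h, ⟨h1, h2, h3⟩ | ⟨h1, h2, h3⟩⟩
    · exact ⟨h1, Or.inl ⟨h2, h3⟩⟩
    · exact ⟨h1.symm, Or.inr ⟨h2, h3⟩⟩
  · rintro ⟨h1, ⟨h2, h3⟩ | ⟨h2, h3⟩⟩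
    · exact ⟨by simp [Prod.ext_iff, h2, h3], Or.inl ⟨h1, h2, h3⟩⟩
    · exact ⟨by simp [Prod.ext_iff, h2, h3], Or.inr ⟨h1.symm, h2, h3⟩⟩

set_option linter.unusedSectionVars false

lemma deg_l (a : V) : (((addPaths2 H v k).neighborSet (Sum.inl a)).ncard : ℝ)
    = ((H.neighborSet a).ncard : ℝ) + (if a = v then (k : ℝ) else 0) := by
  have hset : (addPaths2 H v k).neighborSet (Sum.inl a)
      = (Sum.inl '' H.neighborSet a) ∪
        (if a = v then Sum.inr '' {c : Fin k × Fin 2 | c.2 = 0} else ∅) := by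
    ext y
    cases y with
    | inl b => by_cases hav : a = v <;>
        simp [SimpleGraph.neighborSet, adj_ll, hav]
    | inr c => by_cases hav : a = v <;>
        simp [SimpleGraph.neighborSet, adj_lr, hav]
  rw [hset, Set.ncard_union_eq]
  · have h1 : (Sum.inl '' H.neighborSet a : Set (V ⊕ Fin k × Fin 2)).ncard
        = (H.neighborSet a).ncard := Set.ncard_image_of_injective _ Sum.inl_injective
    have h2 : ({c : Fin k × Fin 2 | c.2 = 0}).ncard = k := by
      have : {c : Fin k × Fin 2 | c.2 = 0} = (fun j : Fin k => (j, 0)) '' Set.univ := by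
        ext ⟨j, t⟩
        simp [Prod.ext_iff, eq_comm]
      rw [this, Set.ncard_image_of_injective _ (fun a b h => (Prod.ext_iff.1 h).1),
        Set.ncard_univ]
      simp
    by_cases hav : a = v
    · subst hav
      simp [h1, h2, Set.ncard_image_of_injective _ Sum.inr_injective]
    · simp [hav, h1]
  · by_cases hav : a = v
    all_goals simp [hav, Set.disjoint_left]

lemma deg_r0 (j : Fin k) : (((addPaths2 H v k).neighborSet (Sum.inr (j, 0))).ncard : ℝ) = 2 := by
  have hset : (addPaths2 H v k).neighborSet (Sum.inr (j, 0))
      = {Sum.inl v, Sum.inr (j, 1)} := by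
    ext y
    cases y with
    | inl b => simp [SimpleGraph.neighborSet, adj_rl]
    | inr c =>
      obtain ⟨j', t'⟩ := c
      fin_cases t' <;> simp [SimpleGraph.neighborSet, adj_rr, eq_comm]
  rw [hset, Set.ncard_pair (by simp)]
  norm_num

lemma deg_r1 (j : Fin k) : (((addPaths2 H v k).neighborSet (Sum.inr (j, 1))).ncard : ℝ) = 1 := by
  have hset : (addPaths2 H v k).neighborSet (Sum.inr (j, 1))
      = {Sum.inr (j, 0)} := by
    ext y
    cases y with
    | inl b => simp [SimpleGraph.neighborSet, adj_rl]
    | inr c =>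
      obtain ⟨j', t'⟩ := c
      fin_cases t' <;> simp [SimpleGraph.neighborSet, adj_rr, eq_comm]
  rw [hset, Set.ncard_singleton]
  norm_num

/-- Inflation of a 2×2 matrix to `k` diagonal blocks. -/
noncomputable def infl (k : ℕ) (M : Matrix (Fin 2) (Fin 2) ℝ) :
    Matrix (Fin k × Fin 2) (Fin k × Fin 2) ℝ :=
  Matrix.of fun c d => if c.1 = d.1 then M c.2 d.2 else 0

lemma infl_mul (k : ℕ) (M N : Matrix (Fin 2) (Fin 2) ℝ) :
    infl k M * infl k N = infl k (M * N) := by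
  ext c d
  simp only [infl, Matrix.mul_apply, Matrix.of_apply]
  rw [Fintype.sum_prod_type]
  rw [Finset.sum_eq_single c.1]
  · by_cases h : c.1 = d.1 <;> simp [h, Matrix.mul_apply]
  · intro l _ hl
    simp [Ne.symm hl]
  · simp

lemma infl_one (k : ℕ) : infl k 1 = 1 := by
  ext c d
  by_cases h1 : c.1 = d.1 <;> by_cases h2 : c.2 = d.2 <;>
    simp [infl, Matrix.one_apply, Prod.ext_iff, h1, h2]

noncomputable def Pm (x : ℝ) : Matrix (Fin 2) (Fin 2) ℝ := !![x - 2, -1; -1, x - 1]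

noncomputable def Em (x : ℝ) : Matrix (Fin 2) (Fin 2) ℝ :=
  (x ^ 2 - 3 * x + 1)⁻¹ • !![x - 1, 1; 1, x - 2]

lemma Pm_mul_Em (x : ℝ) (hp : x ^ 2 - 3 * x + 1 ≠ 0) : Pm x * Em x = 1 := by
  ext i j
  fin_cases i <;> fin_cases j <;>
    simp [Pm, Em, Matrix.mul_apply, Fin.sum_univ_two, Matrix.one_apply] <;>
    field_simp [show x * (x - 3) + 1 ≠ 0 by intro h; apply hp; linear_combination h] <;> ring

lemma Em_mul_Pm (x : ℝ) (hp : x ^ 2 - 3 * x + 1 ≠ 0) : Em x * Pm x = 1 := by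
  ext i j
  fin_cases i <;> fin_cases j <;>
    simp [Pm, Em, Matrix.mul_apply, Fin.sum_univ_two, Matrix.one_apply] <;>
    field_simp [show x * (x - 3) + 1 ≠ 0 by intro h; apply hp; linear_combination h] <;> ring

lemma det_infl_Pm (k : ℕ) (x : ℝ) : (infl k (Pm x)).det = (x ^ 2 - 3 * x + 1) ^ k := by
  have h : infl k (Pm x) =
      (Matrix.blockDiagonal fun _ : Fin k => Pm x).submatrix
        (Equiv.prodComm (Fin k) (Fin 2)) (Equiv.prodComm (Fin k) (Fin 2)) := by
    ext c d
    by_cases h1 : c.1 = d.1 <;>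
      simp [infl, Matrix.blockDiagonal_apply, h1, eq_comm]
  rw [h, Matrix.det_submatrix_equiv_self, Matrix.det_blockDiagonal]
  have : (Pm x).det = x ^ 2 - 3 * x + 1 := by
    simp [Pm, Matrix.det_fin_two]
    ring
  simp [this]

lemma eval_charpoly {n : Type} [Fintype n] [DecidableEq n] (M : Matrix n n ℝ) (x : ℝ) :
    M.charpoly.eval x = (x • (1 : Matrix n n ℝ) - M).det := by
  rw [Matrix.charpoly, ← Polynomial.coe_evalRingHom, RingHom.map_det]
  congr 1
  ext i j
  by_cases h : i = j <;>
    simp [Matrix.charmatrix_apply, Matrix.one_apply, Matrix.smul_apply, h, Matrix.sub_apply]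

noncomputable def Evv (v : V) : Matrix V V ℝ :=
  Matrix.of fun a b => if a = v ∧ b = v then (1 : ℝ) else 0

noncomputable def Boff (v : V) (k : ℕ) : Matrix V (Fin k × Fin 2) ℝ :=
  Matrix.of fun a c => if a = v ∧ c.2 = 0 then (-1 : ℝ) else 0

noncomputable def Coff (v : V) (k : ℕ) : Matrix (Fin k × Fin 2) V ℝ :=
  Matrix.of fun c a => if a = v ∧ c.2 = 0 then (-1 : ℝ) else 0

lemma block_decomp (x : ℝ) :
    x • (1 : Matrix (V ⊕ Fin k × Fin 2) (V ⊕ Fin k × Fin 2) ℝ) - sLap (addPaths2 H v k) =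
      Matrix.fromBlocks
        (x • (1 : Matrix V V ℝ) - sLap H - (k : ℝ) • Evv v)
        (Boff v k) (Coff v k) (infl k (Pm x)) := by
  ext i j
  cases i with
  | inl a =>
    cases j with
    | inl b =>
      by_cases hab : a = b
      · subst hab
        by_cases hav : a = v <;>
          simp [sLap, Evv, Matrix.one_apply, deg_l, adj_ll, hav]
        ring
      · have : ¬ (a = v ∧ b = v) := by rintro ⟨rfl, rfl⟩; exact hab rfl
        simp [sLap, Evv, Matrix.one_apply, hab, adj_ll, this]
    | inr c =>
      by_cases h : a = v ∧ c.2 = 0 <;>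
        simp [sLap, Boff, Matrix.one_apply, adj_lr, h]
  | inr c =>
    cases j with
    | inl b =>
      by_cases h : b = v ∧ c.2 = 0 <;>
        simp [sLap, Coff, Matrix.one_apply, adj_rl, h]
    | inr d =>
      obtain ⟨j1, t1⟩ := c
      obtain ⟨j2, t2⟩ := d
      by_cases hj : j1 = j2
      · subst hj
        fin_cases t1 <;> fin_cases t2 <;>
          simp [sLap, infl, Pm, Matrix.one_apply, adj_rr, deg_r0, deg_r1, Prod.ext_iff] <;>
          ring
      · fin_cases t1 <;> fin_cases t2 <;>
          simp [sLap, infl, Pm, Matrix.one_apply, adj_rr, hj, Prod.ext_iff]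

lemma triple_prod (x : ℝ) :
    Boff v k * infl k (Em x) * Coff v k =
      ((k : ℝ) * ((x ^ 2 - 3 * x + 1)⁻¹ * (x - 1))) • Evv v := by
  ext a b
  simp only [Matrix.mul_apply, Finset.sum_mul]
  rw [Finset.sum_comm]
  simp only [Boff, Coff, infl, Evv, Matrix.of_apply, Matrix.smul_apply, smul_eq_mul]
  by_cases ha : a = v
  · by_cases hb : b = v
    · subst ha; subst hb
      simp only [true_and, if_true]
      simp only [Fintype.sum_prod_type, Fin.sum_univ_two]
      simp [Finset.sum_ite_eq', Em]
    · simp [hb]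
  · simp [ha]

lemma det_updateRow_single (M : Matrix V V ℝ) (v : V) :
    (M.updateRow v (fun b => if b = v then (1 : ℝ) else 0)).det
      = (M.submatrix (fun y : {y : V // y ≠ v} => (y : V))
          (fun y : {y : V // y ≠ v} => (y : V))).det := by
  haveI : Unique {y : V // ¬ y ≠ v} := by
    refine ⟨⟨⟨v, by simp⟩⟩, ?_⟩
    rintro ⟨y, hy⟩
    rw [not_not] at hy
    subst hy
    rfl
  set e := Equiv.sumCompl (fun y : V => y ≠ v) with he
  rw [← Matrix.det_submatrix_equiv_self e]
  have hblock : (M.updateRow v fun b => if b = v then (1 : ℝ) else 0).submatrix e e =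
      Matrix.fromBlocks
        (M.submatrix (fun y : {y : V // y ≠ v} => (y : V))
          (fun y : {y : V // y ≠ v} => (y : V)))
        (Matrix.of fun (y : {y : V // y ≠ v}) (_ : {y : V // ¬ y ≠ v}) => M (y : V) v)
        0 (Matrix.of fun _ _ => (1 : ℝ)) := by
    ext i j
    cases i with
    | inl u =>
      cases j with
      | inl w =>
        simp [he, Matrix.updateRow_ne u.2, Equiv.sumCompl_apply_inl]
      | inr w =>
        obtain ⟨w, hw⟩ := w
        rw [not_not] at hw
        subst hw
        simp [he, Matrix.updateRow_ne u.2, Equiv.sumCompl_apply_inl,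
          Equiv.sumCompl_apply_inr]
    | inr u =>
      obtain ⟨u, hu⟩ := u
      rw [not_not] at hu
      subst hu
      cases j with
      | inl w =>
        simp [he, Equiv.sumCompl_apply_inl, Equiv.sumCompl_apply_inr,
          Matrix.updateRow_self, w.2]
      | inr w =>
        obtain ⟨w, hw⟩ := w
        rw [not_not] at hw
        subst hw
        simp [he, Equiv.sumCompl_apply_inr, Matrix.updateRow_self]
  rw [hblock, Matrix.det_fromBlocks_zero₂₁]
  simp [Matrix.det_unique]

lemma det_sub_smul_Evv (M : Matrix V V ℝ) (v : V) (c : ℝ) :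
    (M - c • Evv v).det = M.det - c *
      (M.submatrix (fun y : {y : V // y ≠ v} => (y : V))
        (fun y : {y : V // y ≠ v} => (y : V))).det := by
  have h1 : M - c • Evv v =
      M.updateRow v (M v + (-c) • fun b => if b = v then (1 : ℝ) else 0) := by
    ext a b
    by_cases hav : a = v <;> by_cases hbv : b = v <;>
      simp [Evv, hav, hbv, Matrix.updateRow_apply, sub_eq_add_neg]
  rw [h1, Matrix.det_updateRow_add, Matrix.updateRow_eq_self, Matrix.det_updateRow_smul,
    det_updateRow_single]
  ring

lemma eval_main (x : ℝ) (hp : x ^ 2 - 3 * x + 1 ≠ 0) :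
    (QPoly (addPaths2 H v k)).eval x
      = (x ^ 2 - 3 * x + 1) ^ k * (QPoly H).eval x
        - (k : ℝ) * x * (x - 2) * (x ^ 2 - 3 * x + 1) ^ (k - 1) * (QPolyDel H v).eval x := by
  haveI hinv : Invertible (infl k (Pm x)) :=
    ⟨infl k (Em x), by rw [infl_mul, Em_mul_Pm x hp, infl_one],
      by rw [infl_mul, Pm_mul_Em x hp, infl_one]⟩
  have hInvOf : ⅟(infl k (Pm x)) = infl k (Em x) :=
    invOf_eq_right_inv (by rw [infl_mul, Pm_mul_Em x hp, infl_one])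
  have hdel : (QPolyDel H v).eval x =
      ((x • (1 : Matrix V V ℝ) - sLap H).submatrix
        (fun y : {y : V // y ≠ v} => (y : V)) (fun y : {y : V // y ≠ v} => (y : V))).det := by
    rw [QPolyDel, _root_.eval_charpoly]
    congr 1
    ext y z
    by_cases h : y = z
    · simp [h, Matrix.one_apply]
    · have h' : (y : V) ≠ (z : V) := fun hh => h (Subtype.ext hh)
      simp [Matrix.one_apply, h, h']
  have hA : (x • (1 : Matrix V V ℝ) - sLap H - (k : ℝ) • Evv v)
        - Boff v k * infl k (Em x) * Coff v k
      = (x • (1 : Matrix V V ℝ) - sLap H)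
        - ((k : ℝ) * x * (x - 2) * (x ^ 2 - 3 * x + 1)⁻¹) • Evv v := by
    rw [triple_prod, sub_sub, ← add_smul]
    congr 2
    field_simp [show x * (x - 3) + 1 ≠ 0 by intro h; apply hp; linear_combination h]
    ring
  rw [QPoly, _root_.eval_charpoly, block_decomp H v k x, Matrix.det_fromBlocks₂₂, hInvOf,
    det_infl_Pm, hA, det_sub_smul_Evv, ← hdel, QPoly, _root_.eval_charpoly]
  rcases k with _ | n
  · simp
  · rw [mul_sub, Nat.succ_sub_one]
    congr 1
    push_cast
    field_simp [show x * (x - 3) + 1 ≠ 0 by intro h; apply hp; linear_combination h]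
    ring

theorem QPoly_addPaths2' (H : SimpleGraph V) (v : V) (k : ℕ) :
    QPoly (addPaths2 H v k) =
      (X ^ 2 - 3 * X + 1) ^ k * QPoly H -
        (k : Polynomial ℝ) * X * (X - 2) * (X ^ 2 - 3 * X + 1) ^ (k - 1) * QPolyDel H v := by
  have hq : ((X : Polynomial ℝ) ^ 2 - 3 * X + 1) ≠ 0 := by
    intro h
    have := congrArg (Polynomial.eval 3) h
    simp at this
    norm_num at this
  have hfin := Polynomial.finite_setOf_isRoot hq
  have hinf := hfin.infinite_compl
  rw [← sub_eq_zero]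
  apply Polynomial.eq_zero_of_infinite_isRoot
  apply hinf.mono
  intro x hx
  simp only [Set.mem_compl_iff, Set.mem_setOf_eq, Polynomial.IsRoot] at hx ⊢
  have hp : x ^ 2 - 3 * x + 1 ≠ 0 := by
    intro h
    exact hx (by simp [h])
  simp only [Polynomial.eval_sub, Polynomial.eval_add, Polynomial.eval_mul, Polynomial.eval_pow,
    Polynomial.eval_one, Polynomial.eval_X, Polynomial.eval_natCast, Polynomial.eval_ofNat]
  rw [sub_eq_zero]
  exact eval_main H v k x hp

end AuxQP

theorem QPoly_addPaths2 {V : Type} [Fintype V] [DecidableEq V]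
    (H : SimpleGraph V) (hH : H.Connected) (hV : 2 ≤ Fintype.card V) (v : V) (k : ℕ) :
    QPoly (addPaths2 H v k) =
      (X ^ 2 - 3 * X + 1) ^ k * QPoly H -
        (k : Polynomial ℝ) * X * (X - 2) * (X ^ 2 - 3 * X + 1) ^ (k - 1) * QPolyDel H v :=
  QPoly_addPaths2' H v k
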